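/- For all k, ℓ ≥ 0 and n > 0, ∑_{s=0}^{ℓ} (-1)^{ℓ-s} u^{binom(ℓ-s,2)} · [k+s choose n]_u · [k+2s choose s]_u · [k+s+ℓ choose ℓ-s]_u · [k+2ℓ]/[k+s+ℓ] = u^{ℓ²+ℓ(k-n)} · ([k+2ℓ]/[n+ℓ]) · [n+ℓ choose n]_u · [k+ℓ-1 choose n-1]_u. -/

import Mathlib

open Finset

noncomputable section

/-- The field of rational functions in the variable `u`. -/
abbrev K : Type := RatFunc ℚ

/-- The variable `u`. -/
def u : K := RatFunc.X

/-- The u-integer `[m] = 1 + u + ... + u^{m-1}`. -/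
def qint (m : ℕ) : K := ∑ i ∈ range m, u ^ i

/-- The u-factorial `[m]! = [1][2]⋯[m]`. -/
def qfact (m : ℕ) : K := ∏ i ∈ range m, qint (i + 1)

/-- The Gaussian binomial coefficient `[a choose b]_u`, zero unless `0 ≤ b ≤ a`. -/
def qbinom (a b : ℤ) : K :=
  if 0 ≤ b ∧ b ≤ a then qfact a.toNat / (qfact b.toNat * qfact (a - b).toNat) else 0

lemma u_pow_ne_one {m : ℕ} (hm : 1 ≤ m) : (u : K) ^ m ≠ 1 := by
  rw [u, ← RatFunc.algebraMap_X, ← map_pow, ← map_one (algebraMap (Polynomial ℚ) K)]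
  intro h
  have h2 := RatFunc.algebraMap_injective ℚ h
  have := congrArg (Polynomial.eval 0) h2
  simp [Polynomial.eval_pow, zero_pow (by omega : m ≠ 0)] at this

lemma hu0 : (u : K) ≠ 0 := RatFunc.X_ne_zero
lemma hu1 : (u : K) ≠ 1 := by simpa using u_pow_ne_one (le_refl 1)
lemma husub : (u : K) - 1 ≠ 0 := sub_ne_zero.mpr hu1

def Q (m : ℤ) : K := (u ^ m - 1) / (u - 1)

lemma qint_eq (m : ℕ) : qint m = Q m := by
  rw [qint, Q, geom_sum_eq hu1, zpow_natCast]

lemma Q_zero : Q 0 = 0 := by simp [Q]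

lemma qint_ne {m : ℕ} (hm : 1 ≤ m) : qint m ≠ 0 := by
  rw [qint_eq, Q, zpow_natCast]
  exact div_ne_zero (sub_ne_zero.mpr (u_pow_ne_one hm)) husub

lemma qfact_succ (m : ℕ) : qfact (m + 1) = qfact m * qint (m + 1) :=
  prod_range_succ _ _

lemma qfact_ne (m : ℕ) : qfact m ≠ 0 := by
  induction m with
  | zero => simp [qfact]
  | succ n ih => rw [qfact_succ]; exact mul_ne_zero ih (qint_ne (by omega))

lemma qbinom_nat {a b : ℕ} (h : b ≤ a) :
    qbinom a b = qfact a / (qfact b * qfact (a - b)) := by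
  have h1 : ((a:ℤ)).toNat = a := by simp
  have h2 : ((b:ℤ)).toNat = b := by simp
  have h3 : ((a:ℤ) - b).toNat = a - b := by omega
  rw [qbinom, if_pos ⟨Int.ofNat_nonneg b, by exact_mod_cast h⟩, h1, h2, h3]

lemma qbinom_zero_left {a b : ℤ} (h : a < b) : qbinom a b = 0 := by
  rw [qbinom, if_neg]; omega

lemma qbinom_zero_neg {a b : ℤ} (h : b < 0) : qbinom a b = 0 := by
  rw [qbinom, if_neg]; omega

lemma qbinom_zero_right {a : ℤ} (h : 0 ≤ a) : qbinom a 0 = 1 := by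
  rw [qbinom, if_pos ⟨le_refl 0, h⟩]
  simp only [Int.toNat_zero, sub_zero]
  rw [show qfact 0 = 1 by simp [qfact], one_mul, div_self (qfact_ne _)]

lemma qbinom_self {a : ℤ} (h : 0 ≤ a) : qbinom a a = 1 := by
  rw [qbinom, if_pos ⟨h, le_refl a⟩]
  simp only [sub_self, Int.toNat_zero]
  rw [show qfact 0 = 1 by simp [qfact], mul_one, div_self (qfact_ne _)]

lemma qint_add (a b : ℕ) : qint (a + b) = qint a + u ^ a * qint b := by
  rw [qint, qint, qint, Finset.sum_range_add, Finset.mul_sum]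
  congr 1
  exact Finset.sum_congr rfl fun i _ => (pow_add u a i)

def qb (x : ℤ) (N : ℕ) : K := (∏ j ∈ range N, Q (x - j)) / qfact N

lemma Q_shift (x : ℤ) (N : ℕ) :
    Q (x + 1) - Q (x - N) = u ^ (x - (N:ℤ)) * qint (N + 1) := by
  have h : qint (N + 1) = Q ((N:ℤ) + 1) := by rw [qint_eq]; norm_cast
  rw [h, Q, Q, Q, div_sub_div_same, ← mul_div_assoc]
  congr 1
  rw [mul_sub, ← zpow_add₀ hu0, mul_one]
  have he : x - (N:ℤ) + ((N:ℤ) + 1) = x + 1 := by ring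
  rw [he]
  ring

lemma qb_pascal (x : ℤ) (N : ℕ) :
    qb (x + 1) (N + 1) - qb x (N + 1) = u ^ (x - (N:ℤ)) * qb x N := by
  have hq : qint (N + 1) ≠ 0 := qint_ne (by omega)
  have hf : qfact N ≠ 0 := qfact_ne N
  rw [qb, qb, qb, qfact_succ, div_sub_div_same]
  have h1 : ∏ j ∈ range (N+1), Q (x + 1 - j) = Q (x + 1) * ∏ j ∈ range N, Q (x - j) := by
    rw [prod_range_succ',
      Finset.prod_congr rfl (fun j _ => show Q (x + 1 - ((j:ℕ)+1:ℕ)) = Q (x - j) by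
        congr 1; push_cast; ring),
      show Q (x + 1 - ((0:ℕ):ℤ)) = Q (x + 1) by norm_num, mul_comm]
  have h2 : ∏ j ∈ range (N+1), Q (x - j) = (∏ j ∈ range N, Q (x - j)) * Q (x - N) :=
    prod_range_succ _ _
  rw [h1, h2]
  have h3 : Q (x + 1) * ∏ j ∈ range N, Q (x - j) - (∏ j ∈ range N, Q (x - j)) * Q (x - N)
      = (Q (x + 1) - Q (x - N)) * ∏ j ∈ range N, Q (x - j) := by ring
  rw [h3, Q_shift]
  field_simp

lemma prod_Q {a M : ℕ} (h : M ≤ a) :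
    ∏ j ∈ range M, Q ((a:ℤ) - j) = qfact a / qfact (a - M) := by
  induction M with
  | zero => simp [div_self (qfact_ne a)]
  | succ m ih =>
    rw [prod_range_succ, ih (by omega)]
    have h2 : Q ((a:ℤ) - m) = qint (a - m) := by
      rw [qint_eq]; congr 1; omega
    have h1 : a - m = (a - (m+1)) + 1 := by omega
    rw [h2, h1, qfact_succ]
    have hq : qint (a - (m+1) + 1) ≠ 0 := qint_ne (by omega)
    have hf : qfact (a - (m+1)) ≠ 0 := qfact_ne _
    field_simp

lemma qb_nat {a N : ℕ} (h : N ≤ a) : qb (a:ℤ) N = qbinom a N := by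
  rw [qb, prod_Q h, qbinom_nat h, div_div]
  ring_nf

lemma qb_zero {x : ℤ} {N : ℕ} (h0 : 0 ≤ x) (h : x < N) : qb x N = 0 := by
  rw [qb, Finset.prod_eq_zero (i := x.toNat) (by simp; omega)]
  · simp
  · have : x - (x.toNat : ℤ) = 0 := by omega
    rw [this, Q_zero]

lemma qbinom_pascal (l s : ℕ) :
    qbinom ((l:ℤ) + 1) s = qbinom l ((s:ℤ) - 1) + u ^ s * qbinom l s := by
  rcases Nat.eq_zero_or_pos s with rfl | hs
  · simp only [Nat.cast_zero]
    rw [qbinom_zero_right (by positivity), qbinom_zero_neg (by norm_num),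
      qbinom_zero_right (by positivity)]
    simp
  obtain ⟨t, rfl⟩ : ∃ t, s = t + 1 := ⟨s - 1, by omega⟩
  rcases le_or_gt (t + 1) l with h1 | h1
  · -- main case: 1 ≤ s ≤ l
    obtain ⟨r, rfl⟩ : ∃ r, l = t + 1 + r := ⟨l - (t+1), by omega⟩
    have c1 : ((t + 1 + r : ℕ) : ℤ) + 1 = ((t + 1 + r + 1 : ℕ) : ℤ) := by push_cast; ring
    have c2 : ((t + 1 : ℕ) : ℤ) - 1 = ((t : ℕ) : ℤ) := by push_cast; ring
    rw [c1, c2, qbinom_nat (show t + 1 ≤ t + 1 + r + 1 by omega),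
      qbinom_nat (show t ≤ t + 1 + r by omega),
      qbinom_nat (show t + 1 ≤ t + 1 + r by omega)]
    have e1 : t + 1 + r + 1 - (t + 1) = r + 1 := by omega
    have e2 : t + 1 + r - t = r + 1 := by omega
    have e3 : t + 1 + r - (t + 1) = r := by omega
    rw [e1, e2, e3]
    have key : qint (t + 1 + r + 1) = qint (t + 1) + u ^ (t + 1) * qint (r + 1) := by
      have : t + 1 + r + 1 = (t + 1) + (r + 1) := by omega
      rw [this, qint_add]
    have f1 : qfact (t + 1 + r + 1) = qfact (t + 1 + r) * qint (t + 1 + r + 1) := qfact_succ _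
    have f2 : qfact (t + 1) = qfact t * qint (t + 1) := qfact_succ _
    have f3 : qfact (r + 1) = qfact r * qint (r + 1) := qfact_succ _
    rw [f1, f2, f3, key]
    have n1 : qfact t ≠ 0 := qfact_ne t
    have n2 : qfact r ≠ 0 := qfact_ne r
    have n3 : qfact (t + 1 + r) ≠ 0 := qfact_ne _
    have n4 : qint (t + 1) ≠ 0 := qint_ne (by omega)
    have n5 : qint (r + 1) ≠ 0 := qint_ne (by omega)
    field_simp
  rcases eq_or_lt_of_le (show l + 1 ≤ t + 1 from h1) with h2 | h2
  · -- s = l + 1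
    have hc : ((l:ℤ) + 1) = ((t + 1 : ℕ) : ℤ) := by omega
    have hc2 : ((t + 1 : ℕ) : ℤ) - 1 = ((l : ℕ) : ℤ) := by omega
    rw [hc, qbinom_self (by positivity), hc2, qbinom_self (by positivity),
      qbinom_zero_left (by omega)]
    simp
  · -- s > l + 1 : all zero
    rw [qbinom_zero_left (by push_cast; omega), qbinom_zero_left (by push_cast; omega),
      qbinom_zero_left (by push_cast; omega)]
    simp

lemma main_lemma (l : ℕ) : ∀ (x : ℤ) (N : ℕ), l ≤ N →
    ∑ s ∈ range (l + 1),
      (-1 : K) ^ (l - s) * u ^ ((l - s).choose 2) * qbinom (l : ℤ) (s : ℤ) * qb (x + s) N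
    = u ^ ((l : ℤ) * (x + l - N)) * qb x (N - l) := by
  induction l with
  | zero =>
    intro x N _
    rw [Finset.sum_range_one]
    rw [show ((0:ℕ):ℤ) = (0:ℤ) by norm_num, qbinom_zero_right le_rfl]
    norm_num
  | succ l ih =>
    intro x N h
    push_cast
    calc (∑ s ∈ range (l+1+1), (-1:K)^(l+1-s) * u^((l+1-s).choose 2) *
            qbinom ((l:ℤ)+1) (s:ℤ) * qb (x+(s:ℤ)) N)
        = (∑ s ∈ range (l+1+1), (-1:K)^(l+1-s) * u^((l+1-s).choose 2) *
            qbinom (l:ℤ) ((s:ℤ)-1) * qb (x+s) N)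
          + ∑ s ∈ range (l+1+1), (-1:K)^(l+1-s) * u^((l+1-s).choose 2) * u^s *
            qbinom (l:ℤ) (s:ℤ) * qb (x+s) N := by
          rw [← Finset.sum_add_distrib]
          exact Finset.sum_congr rfl fun s _ => by rw [qbinom_pascal l s]; ring
      _ = (∑ s ∈ range (l+1), (-1:K)^(l-s) * u^((l-s).choose 2) *
            qbinom (l:ℤ) (s:ℤ) * qb ((x+1)+s) N)
          + ∑ s ∈ range (l+1), (-(u:K)^l) *
            ((-1:K)^(l-s) * u^((l-s).choose 2) * qbinom (l:ℤ) (s:ℤ) * qb (x+s) N) := by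
          congr 1
          · rw [Finset.sum_range_succ']
            have h0 : (-1:K)^(l+1-0) * u^((l+1-0).choose 2) *
                qbinom (l:ℤ) (((0:ℕ):ℤ)-1) * qb (x+((0:ℕ):ℤ)) N = 0 := by
              rw [qbinom_zero_neg (by norm_num)]; ring
            rw [h0, add_zero]
            refine Finset.sum_congr rfl fun s _ => ?_
            have e1 : l + 1 - (s+1) = l - s := by omega
            have e2 : (((s+1:ℕ)):ℤ) - 1 = (s:ℤ) := by push_cast; ring
            have e3 : x + (((s+1:ℕ)):ℤ) = (x+1) + (s:ℤ) := by push_cast; ring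
            rw [e1, e2, e3]
          · rw [Finset.sum_range_succ]
            have h0 : (-1:K)^(l+1-(l+1)) * u^((l+1-(l+1)).choose 2) * u^(l+1) *
                qbinom (l:ℤ) (((l+1:ℕ)):ℤ) * qb (x+((l+1:ℕ):ℤ)) N = 0 := by
              rw [qbinom_zero_left (by push_cast; omega)]; ring
            rw [h0, add_zero]
            refine Finset.sum_congr rfl fun s hs => ?_
            have hsl : s ≤ l := Nat.lt_succ_iff.mp (mem_range.mp hs)
            have e1 : l + 1 - s = (l - s) + 1 := by omega
            have e2 : ((l - s) + 1).choose 2 = (l - s).choose 2 + (l - s) := by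
              have h2 := Nat.choose_succ_succ (l - s) 1
              norm_num [Nat.choose_one_right] at h2
              omega
            have e3 : (u:K)^(l-s) * u^s = u^l := by rw [← pow_add]; congr 1; omega
            calc (-1:K)^(l+1-s) * u^((l+1-s).choose 2) * u^s *
                  qbinom (l:ℤ) (s:ℤ) * qb (x+s) N
                = -((-1:K)^(l-s) * u^((l-s).choose 2) * (u^(l-s) * u^s) *
                    qbinom (l:ℤ) (s:ℤ) * qb (x+s) N) := by
                  rw [e1, e2, pow_succ, pow_add]; ring
              _ = -(u:K)^l * ((-1:K)^(l-s) * u^((l-s).choose 2) *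
                    qbinom (l:ℤ) (s:ℤ) * qb (x+s) N) := by rw [e3]; ring
      _ = u ^ ((l:ℤ)*((x+1)+l-N)) * qb (x+1) (N-l)
          + (-(u:K)^l) * (u ^ ((l:ℤ)*(x+l-N)) * qb x (N-l)) := by
          rw [ih (x+1) N (by omega), ← Finset.mul_sum, ih x N (by omega)]
      _ = u ^ (((l:ℤ)+1)*(x+((l:ℤ)+1)-N)) * qb x (N-(l+1)) := by
          set M := N - (l+1) with hMdef
          have hM1 : N - l = M + 1 := by omega
          have hMc : (M:ℤ) = (N:ℤ) - (l:ℤ) - 1 := by omega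
          rw [hM1]
          have hp := qb_pascal x M
          have h2 : (u:K)^((l:ℤ)) * u^((l:ℤ)*(x+(l:ℤ)-(N:ℤ))) =
              u^((l:ℤ)*((x+1)+(l:ℤ)-(N:ℤ))) := by
            rw [← zpow_add₀ hu0]; congr 1; ring
          have expand : u ^ ((l:ℤ)*((x+1)+(l:ℤ)-(N:ℤ))) * qb (x+1) (M+1)
              + (-(u:K)^l) * (u ^ ((l:ℤ)*(x+(l:ℤ)-(N:ℤ))) * qb x (M+1))
              = u^((l:ℤ)*((x+1)+(l:ℤ)-(N:ℤ))) * (qb (x+1) (M+1) - qb x (M+1)) := by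
            rw [show ((u:K))^l = u^((l:ℤ)) from (zpow_natCast u l).symm]
            linear_combination (-(qb x (M+1))) * h2
          rw [expand, hp, ← mul_assoc, ← zpow_add₀ hu0]
          congr 2
          rw [hMc]
          ring

lemma term_conv (k l n s : ℕ) (hn : 1 ≤ n) (hs : s ≤ l) (hkl : 1 ≤ k + l) :
    qbinom ((k:ℤ)+s) (n:ℤ) * qbinom ((k:ℤ)+2*s) (s:ℤ) * qbinom ((k:ℤ)+s+l) ((l:ℤ)-s) *
      (qint (k+2*l) / qint (k+s+l))
    = qint (k+2*l) * (qfact (n+l-1) / (qfact l * qfact n)) *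
      (qbinom (l:ℤ) (s:ℤ) * qb ((k:ℤ)+s+(l:ℤ)-1) (n+l-1)) := by
  have c1 : (k:ℤ)+s = ((k+s:ℕ):ℤ) := by push_cast; ring
  have c2 : (k:ℤ)+2*s = ((k+2*s:ℕ):ℤ) := by push_cast; ring
  have c3 : (k:ℤ)+s+l = ((k+s+l:ℕ):ℤ) := by push_cast; ring
  have c4 : (l:ℤ)-s = ((l-s:ℕ):ℤ) := by omega
  have c5 : (k:ℤ)+s+(l:ℤ)-1 = ((k+s+l-1:ℕ):ℤ) := by omega
  rw [c5, c3, c1, c2, c4]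
  rcases le_or_gt n (k+s) with hcase | hcase
  · rw [qbinom_nat hcase, qbinom_nat (show s ≤ k+2*s by omega),
      qbinom_nat (show l-s ≤ k+s+l by omega), qbinom_nat hs,
      qb_nat (show n+l-1 ≤ k+s+l-1 by omega), qbinom_nat (show n+l-1 ≤ k+s+l-1 by omega)]
    have s1 : k+2*s-s = k+s := by omega
    have s2 : k+s+l-(l-s) = k+2*s := by omega
    have s4 : k+s+l-1-(n+l-1) = k+s-n := by omega
    rw [s1, s2, s4]
    have e0 : k+s+l = (k+s+l-1)+1 := by omega
    have f0 := qfact_succ (k+s+l-1)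
    rw [← e0] at f0
    rw [f0]
    have n1 : qfact n ≠ 0 := qfact_ne n
    have n2 : qfact (k+s-n) ≠ 0 := qfact_ne _
    have n3 : qfact s ≠ 0 := qfact_ne _
    have n4 : qfact (k+s) ≠ 0 := qfact_ne _
    have n5 : qfact (l-s) ≠ 0 := qfact_ne _
    have n6 : qfact (k+2*s) ≠ 0 := qfact_ne _
    have n7 : qfact l ≠ 0 := qfact_ne _
    have n8 : qfact (n+l-1) ≠ 0 := qfact_ne _
    have n9 : qint (k+s+l) ≠ 0 := qint_ne (by omega)
    have n10 : qfact (k+s+l-1) ≠ 0 := qfact_ne _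
    field_simp
  · rw [qbinom_zero_left (show ((k+s:ℕ):ℤ) < (n:ℤ) by exact_mod_cast hcase)]
    rw [qb_zero (by positivity)
      (show ((k+s+l-1:ℕ):ℤ) < ((n+l-1:ℕ):ℤ) by
        exact_mod_cast (show k+s+l-1 < n+l-1 by omega))]
    ring

lemma rhs_conv (k l n : ℕ) (hn : 1 ≤ n) (hkl : 1 ≤ k + l) :
    u ^ ((l:ℤ)^2 + (l:ℤ) * ((k:ℤ) - n)) * (qint (k+2*l) / qint (n+l)) *
      qbinom ((n:ℤ)+l) (n:ℤ) * qbinom ((k:ℤ)+l-1) ((n:ℤ)-1)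
    = qint (k+2*l) * (qfact (n+l-1) / (qfact l * qfact n)) *
      (u ^ ((l:ℤ) * (((k:ℤ)+l-1) + l - ((n+l-1:ℕ):ℤ))) * qb ((k:ℤ)+l-1) (n-1)) := by
  have ce : (l:ℤ)^2 + (l:ℤ)*((k:ℤ)-n) = (l:ℤ) * (((k:ℤ)+l-1) + l - ((n+l-1:ℕ):ℤ)) := by
    have hc : ((n+l-1:ℕ):ℤ) = (n:ℤ)+l-1 := by omega
    rw [hc]; ring
  have c1 : (n:ℤ)+l = ((n+l:ℕ):ℤ) := by push_cast; ring
  have c2 : (k:ℤ)+l-1 = ((k+l-1:ℕ):ℤ) := by omega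
  have c3 : (n:ℤ)-1 = ((n-1:ℕ):ℤ) := by omega
  rw [ce, c2, c1, c3]
  rcases le_or_gt n (k+l) with hcase | hcase
  · rw [qbinom_nat (show n ≤ n+l by omega), qbinom_nat (show n-1 ≤ k+l-1 by omega),
      qb_nat (show n-1 ≤ k+l-1 by omega), qbinom_nat (show n-1 ≤ k+l-1 by omega)]
    rw [show n+l-n = l by omega, show k+l-1-(n-1) = k+l-n by omega]
    have e0 : n+l = (n+l-1)+1 := by omega
    have f0 := qfact_succ (n+l-1)
    rw [← e0] at f0
    rw [f0]
    have n1 : qfact n ≠ 0 := qfact_ne n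
    have n2 : qfact l ≠ 0 := qfact_ne _
    have n3 : qfact (n+l-1) ≠ 0 := qfact_ne _
    have n4 : qfact (n-1) ≠ 0 := qfact_ne _
    have n5 : qfact (k+l-n) ≠ 0 := qfact_ne _
    have n6 : qfact (k+l-1) ≠ 0 := qfact_ne _
    have n7 : qint (n+l) ≠ 0 := qint_ne (by omega)
    field_simp
  · rw [qbinom_zero_left (show ((k+l-1:ℕ):ℤ) < ((n-1:ℕ):ℤ) by
      exact_mod_cast (show k+l-1 < n-1 by omega))]
    rw [qb_zero (by positivity) (show ((k+l-1:ℕ):ℤ) < ((n-1:ℕ):ℤ) by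
      exact_mod_cast (show k+l-1 < n-1 by omega))]
    ring

/-- For `k, ℓ ≥ 0` and `n > 0`:
`∑_{s=0}^{ℓ} (-1)^{ℓ-s} u^{binom(ℓ-s,2)} [k+s choose n]_u [k+2s choose s]_u [k+s+ℓ choose ℓ-s]_u·[k+2ℓ]/[k+s+ℓ]`
`= u^{ℓ²+ℓ(k-n)}·([k+2ℓ]/[n+ℓ])·[n+ℓ choose n]_u·[k+ℓ-1 choose n-1]_u`,
computing the matrix product `P^n = A^n·(A^0)^{-1}`. -/
theorem product_matrix_entry (k ℓ n : ℕ) (hn : 0 < n) :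
    ∑ s ∈ range (ℓ + 1),
      (-1 : K) ^ (ℓ - s) * u ^ ((ℓ - s).choose 2) * qbinom ((k : ℤ) + s) (n : ℤ) *
        qbinom ((k : ℤ) + 2 * s) (s : ℤ) * qbinom ((k : ℤ) + s + ℓ) ((ℓ : ℤ) - s) *
        (qint (k + 2 * ℓ) / qint (k + s + ℓ)) =
      u ^ ((ℓ : ℤ) ^ 2 + (ℓ : ℤ) * ((k : ℤ) - n)) * (qint (k + 2 * ℓ) / qint (n + ℓ)) *
        qbinom ((n : ℤ) + ℓ) (n : ℤ) * qbinom ((k : ℤ) + ℓ - 1) ((n : ℤ) - 1) := by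
  rcases Nat.eq_zero_or_pos (k + ℓ) with hkl | hkl
  · obtain ⟨rfl, rfl⟩ : k = 0 ∧ ℓ = 0 := by omega
    rw [Finset.sum_range_one]
    rw [show qint (0 + 2*0) = 0 by simp [qint]]
    simp
  · have hn1 : 1 ≤ n := hn
    have hN : ℓ ≤ n + ℓ - 1 := by omega
    calc ∑ s ∈ range (ℓ + 1),
        (-1 : K) ^ (ℓ - s) * u ^ ((ℓ - s).choose 2) * qbinom ((k : ℤ) + s) (n : ℤ) *
          qbinom ((k : ℤ) + 2 * s) (s : ℤ) * qbinom ((k : ℤ) + s + ℓ) ((ℓ : ℤ) - s) *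
          (qint (k + 2 * ℓ) / qint (k + s + ℓ))
        = ∑ s ∈ range (ℓ + 1), (qint (k+2*ℓ) * (qfact (n+ℓ-1)/(qfact ℓ * qfact n))) *
            ((-1:K)^(ℓ-s) * u^((ℓ-s).choose 2) * qbinom (ℓ:ℤ) (s:ℤ) *
              qb (((k:ℤ)+ℓ-1) + s) (n+ℓ-1)) := by
          refine Finset.sum_congr rfl fun s hs => ?_
          have hsl : s ≤ ℓ := Nat.lt_succ_iff.mp (mem_range.mp hs)
          have hc := term_conv k ℓ n s hn1 hsl hkl
          calc (-1 : K) ^ (ℓ - s) * u ^ ((ℓ - s).choose 2) * qbinom ((k : ℤ) + s) (n : ℤ) *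
                qbinom ((k : ℤ) + 2 * s) (s : ℤ) * qbinom ((k : ℤ) + s + ℓ) ((ℓ : ℤ) - s) *
                (qint (k + 2 * ℓ) / qint (k + s + ℓ))
              = ((-1:K)^(ℓ-s) * u^((ℓ-s).choose 2)) *
                (qbinom ((k:ℤ)+s) (n:ℤ) * qbinom ((k:ℤ)+2*s) (s:ℤ) *
                  qbinom ((k:ℤ)+s+ℓ) ((ℓ:ℤ)-s) * (qint (k+2*ℓ) / qint (k+s+ℓ))) := by ring
            _ = ((-1:K)^(ℓ-s) * u^((ℓ-s).choose 2)) *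
                (qint (k+2*ℓ) * (qfact (n+ℓ-1) / (qfact ℓ * qfact n)) *
                  (qbinom (ℓ:ℤ) (s:ℤ) * qb ((k:ℤ)+s+(ℓ:ℤ)-1) (n+ℓ-1))) := by rw [hc]
            _ = (qint (k+2*ℓ) * (qfact (n+ℓ-1)/(qfact ℓ * qfact n))) *
                ((-1:K)^(ℓ-s) * u^((ℓ-s).choose 2) * qbinom (ℓ:ℤ) (s:ℤ) *
                  qb (((k:ℤ)+ℓ-1) + s) (n+ℓ-1)) := by
                rw [show (k:ℤ)+s+(ℓ:ℤ)-1 = ((k:ℤ)+ℓ-1)+s by ring]; ring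
      _ = (qint (k+2*ℓ) * (qfact (n+ℓ-1)/(qfact ℓ * qfact n))) *
            (u ^ ((ℓ:ℤ) * (((k:ℤ)+ℓ-1) + ℓ - ((n+ℓ-1:ℕ):ℤ))) *
              qb ((k:ℤ)+ℓ-1) ((n+ℓ-1) - ℓ)) := by
          rw [← Finset.mul_sum, main_lemma ℓ ((k:ℤ)+ℓ-1) (n+ℓ-1) hN]
      _ = u ^ ((ℓ : ℤ) ^ 2 + (ℓ : ℤ) * ((k : ℤ) - n)) * (qint (k + 2 * ℓ) / qint (n + ℓ)) *
            qbinom ((n : ℤ) + ℓ) (n : ℤ) * qbinom ((k : ℤ) + ℓ - 1) ((n : ℤ) - 1) := by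
          rw [show (n+ℓ-1) - ℓ = n-1 by omega]
          exact (rhs_conv k ℓ n hn1 hkl).symm

end
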